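/- Let D be a triangulated category with split idempotents and let Z be a full subcategory of D. Then: (1) Z is coreflective and satisfies Σ(Z) ⊆ Z if and only if Z is precovering and closed under taking direct summands and cones; (2) Z is reflective and satisfies Σ⁻¹(Z) ⊆ Z if and only if Z is preenveloping and closed under taking direct summands and cocones. -/

import Mathlib

open CategoryTheory Limits

universe w v u

namespace PaperStmt

variable {C : Type u} [Category.{v} C]

/-- The subcategory (object property) `B` is closed under isomorphisms. -/
def ClosedUnderIso (B : C → Prop) : Prop :=
  ∀ ⦃X Y : C⦄, (X ≅ Y) → B X → B Y

/-- `B` is closed under direct summands (retracts). -/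
def ClosedUnderSummands (B : C → Prop) : Prop :=
  ∀ ⦃X Y : C⦄, B X → (∃ (s : Y ⟶ X) (r : X ⟶ Y), s ≫ r = 𝟙 Y) → B Y

/-- `f : X ⟶ A` is a `B`-precover of `A`. -/
def IsPrecover (B : C → Prop) {X A : C} (f : X ⟶ A) : Prop :=
  B X ∧ ∀ ⦃Y : C⦄, B Y → ∀ g : Y ⟶ A, ∃ h : Y ⟶ X, h ≫ f = g

/-- `B` is a precovering subcategory. -/
def Precovering (B : C → Prop) : Prop :=
  ∀ A : C, ∃ (X : C) (f : X ⟶ A), IsPrecover B f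

/-- `f : A ⟶ X` is a `B`-preenvelope of `A`. -/
def IsPreenvelope (B : C → Prop) {A X : C} (f : A ⟶ X) : Prop :=
  B X ∧ ∀ ⦃Y : C⦄, B Y → ∀ g : A ⟶ Y, ∃ h : X ⟶ Y, f ≫ h = g

/-- `B` is a preenveloping subcategory. -/
def Preenveloping (B : C → Prop) : Prop :=
  ∀ A : C, ∃ (X : C) (f : A ⟶ X), IsPreenvelope B f

/-- `f : X ⟶ A` is a `B`-coreflection of `A`. -/
def IsCoreflection (B : C → Prop) {X A : C} (f : X ⟶ A) : Prop :=
  B X ∧ ∀ ⦃Y : C⦄, B Y → ∀ g : Y ⟶ A, ∃! h : Y ⟶ X, h ≫ f = g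

/-- `B` is a coreflective subcategory: the inclusion has a right adjoint. -/
def IsCoreflectiveSub (B : C → Prop) : Prop :=
  (ObjectProperty.ι B).IsLeftAdjoint

/-- `B` is a reflective subcategory: the inclusion has a left adjoint. -/
def IsReflectiveSub (B : C → Prop) : Prop :=
  (ObjectProperty.ι B).IsRightAdjoint

section Zero

variable [HasZeroMorphisms C]

/-- `k` is a pseudokernel of `f`. -/
def IsPseudokernel {K X Y : C} (f : X ⟶ Y) (k : K ⟶ X) : Prop :=
  k ≫ f = 0 ∧ ∀ ⦃K' : C⦄ (k' : K' ⟶ X), k' ≫ f = 0 → ∃ t : K' ⟶ K, t ≫ k = k'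

/-- `c` is a pseudocokernel of `f`. -/
def IsPseudocokernel {X Y Q : C} (f : X ⟶ Y) (c : Y ⟶ Q) : Prop :=
  f ≫ c = 0 ∧ ∀ ⦃Q' : C⦄ (c' : Y ⟶ Q'), f ≫ c' = 0 → ∃ t : Q ⟶ Q', c ≫ t = c'

end Zero

/-- `C` has pseudokernels. -/
def HasPseudokernels (C : Type u) [Category.{v} C] [HasZeroMorphisms C] : Prop :=
  ∀ ⦃X Y : C⦄ (f : X ⟶ Y), ∃ (K : C) (k : K ⟶ X), IsPseudokernel f k

/-- `C` has pseudocokernels. -/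
def HasPseudocokernels (C : Type u) [Category.{v} C] [HasZeroMorphisms C] : Prop :=
  ∀ ⦃X Y : C⦄ (f : X ⟶ Y), ∃ (Q : C) (c : Y ⟶ Q), IsPseudocokernel f c

end PaperStmt

namespace PaperStmt

open CategoryTheory.Pretriangulated

open ZeroObject

section AuxC

variable {C : Type u} [Category.{v} C]

/-- auxiliary: reflection. -/
def IsReflection (B : C → Prop) {A X : C} (f : A ⟶ X) : Prop :=
  B X ∧ ∀ ⦃Y : C⦄, B Y → ∀ g : A ⟶ Y, ∃! h : X ⟶ Y, f ≫ h = g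


section Adj

variable (Z : C → Prop)

/-- hom-equiv induced by a coreflection. -/
noncomputable def coreflectionHomEquiv {R A : C} (c : R ⟶ A) (hc : IsCoreflection Z c)
    (X : ObjectProperty.FullSubcategory Z) :
    ((ObjectProperty.ι Z).obj X ⟶ A) ≃ (X ⟶ (⟨R, hc.1⟩ : ObjectProperty.FullSubcategory Z)) where
  toFun g := InducedCategory.homMk (hc.2 X.property g).choose
  invFun h := (ObjectProperty.ι Z).map h ≫ c
  left_inv g := (hc.2 X.property g).choose_spec.1
  right_inv h := InducedCategory.hom_ext
    ((hc.2 X.property ((ObjectProperty.ι Z).map h ≫ c)).choose_spec.2 h.hom rfl).symm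

lemma coreflectionHomEquiv_symm_apply {R A : C} (c : R ⟶ A) (hc : IsCoreflection Z c)
    (X : ObjectProperty.FullSubcategory Z) (h : X ⟶ (⟨R, hc.1⟩ : ObjectProperty.FullSubcategory Z)) :
    (coreflectionHomEquiv Z c hc X).symm h = (ObjectProperty.ι Z).map h ≫ c := rfl

theorem isCoreflectiveSub_of_coreflections
    (h : ∀ A : C, ∃ (X : C) (f : X ⟶ A), IsCoreflection Z f) :
    IsCoreflectiveSub Z := by
  choose R c hc using h
  refine ⟨_, ⟨Adjunction.adjunctionOfEquivRight
    (G_obj := fun A => (⟨R A, (hc A).1⟩ : ObjectProperty.FullSubcategory Z))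
    (fun X A => coreflectionHomEquiv Z (c A) (hc A) X) ?_⟩⟩
  intro X' X A f g
  apply (coreflectionHomEquiv Z (c A) (hc A) X').symm.injective
  rw [Equiv.symm_apply_apply, coreflectionHomEquiv_symm_apply]
  show (ObjectProperty.ι Z).map f ≫ g =
    ((ObjectProperty.ι Z).map f ≫
      (ObjectProperty.ι Z).map (coreflectionHomEquiv Z (c A) (hc A) X g)) ≫ c A
  rw [Category.assoc]
  congr 1
  exact ((hc A).2 X.property g).choose_spec.1.symm

theorem coreflections_of_isCoreflectiveSub (h : IsCoreflectiveSub Z) :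
    ∀ A : C, ∃ (X : C) (f : X ⟶ A), IsCoreflection Z f := by
  obtain ⟨G, ⟨adj⟩⟩ := h.exists_rightAdjoint
  intro A
  refine ⟨(G.obj A).obj, adj.counit.app A, (G.obj A).property, ?_⟩
  intro Y hY g
  refine ⟨(adj.homEquiv ⟨Y, hY⟩ A g).hom, ?_, ?_⟩
  · have := adj.homEquiv_counit (X := ⟨Y, hY⟩) (Y := A) (g := adj.homEquiv ⟨Y, hY⟩ A g)
    rw [Equiv.symm_apply_apply] at this
    exact this.symm
  · intro y hy
    have : (adj.homEquiv ⟨Y, hY⟩ A).symm (InducedCategory.homMk y) = g := by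
      rw [adj.homEquiv_counit]; exact hy
    rw [← this, Equiv.apply_symm_apply, InducedCategory.homMk_hom]

/-- hom-equiv induced by a reflection. -/
noncomputable def reflectionHomEquiv {R A : C} (c : A ⟶ R) (hc : IsReflection Z c)
    (Y : ObjectProperty.FullSubcategory Z) :
    ((⟨R, hc.1⟩ : ObjectProperty.FullSubcategory Z) ⟶ Y) ≃ (A ⟶ (ObjectProperty.ι Z).obj Y) where
  toFun h := c ≫ (ObjectProperty.ι Z).map h
  invFun g := InducedCategory.homMk (hc.2 Y.property g).choose
  left_inv h := InducedCategory.hom_ext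
    ((hc.2 Y.property (c ≫ (ObjectProperty.ι Z).map h)).choose_spec.2 h.hom rfl).symm
  right_inv g := (hc.2 Y.property g).choose_spec.1

lemma reflectionHomEquiv_apply {R A : C} (c : A ⟶ R) (hc : IsReflection Z c)
    (Y : ObjectProperty.FullSubcategory Z) (h : (⟨R, hc.1⟩ : ObjectProperty.FullSubcategory Z) ⟶ Y) :
    reflectionHomEquiv Z c hc Y h = c ≫ (ObjectProperty.ι Z).map h := rfl

theorem isReflectiveSub_of_reflections
    (h : ∀ A : C, ∃ (X : C) (f : A ⟶ X), IsReflection Z f) :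
    IsReflectiveSub Z := by
  choose R c hc using h
  refine ⟨_, ⟨Adjunction.adjunctionOfEquivLeft
    (F_obj := fun A => (⟨R A, (hc A).1⟩ : ObjectProperty.FullSubcategory Z))
    (fun A Y => reflectionHomEquiv Z (c A) (hc A) Y) ?_⟩⟩
  intro A Y Y' g hh
  rw [reflectionHomEquiv_apply, reflectionHomEquiv_apply]
  show c A ≫ ((ObjectProperty.ι Z).map hh ≫ (ObjectProperty.ι Z).map g) =
    (c A ≫ (ObjectProperty.ι Z).map hh) ≫ (ObjectProperty.ι Z).map g
  rw [Category.assoc]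

theorem reflections_of_isReflectiveSub (h : IsReflectiveSub Z) :
    ∀ A : C, ∃ (X : C) (f : A ⟶ X), IsReflection Z f := by
  obtain ⟨L, ⟨adj⟩⟩ := h.exists_leftAdjoint
  intro A
  refine ⟨(L.obj A).obj, adj.unit.app A, (L.obj A).property, ?_⟩
  intro Y hY g
  refine ⟨((adj.homEquiv A ⟨Y, hY⟩).symm g).hom, ?_, ?_⟩
  · have := adj.homEquiv_unit (X := A) (Y := ⟨Y, hY⟩) (f := (adj.homEquiv A ⟨Y, hY⟩).symm g)
    rw [Equiv.apply_symm_apply] at this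
    exact this.symm
  · intro y hy
    have : adj.homEquiv A ⟨Y, hY⟩ (InducedCategory.homMk y) = g := by
      rw [adj.homEquiv_unit]; exact hy
    rw [← this, Equiv.symm_apply_apply, InducedCategory.homMk_hom]

end Adj

end AuxC

section Tri

variable {D : Type u} [Category.{v} D] [Preadditive D] [HasZeroObject D] [HasShift D ℤ]
    [∀ n : ℤ, (shiftFunctor D n).Additive] [Pretriangulated D]
    (Z : D → Prop)

/-- key construction: coreflections from precovers, cones, summands, split idempotents. -/
theorem exists_coreflection [IsIdempotentComplete D]
    (hpre : Precovering Z) (hsum : ClosedUnderSummands Z)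
    (hcone : ∀ (T : Triangle D), (T ∈ distTriang D) → Z T.obj₁ → Z T.obj₂ → Z T.obj₃)
    (A : D) : ∃ (X : D) (f : X ⟶ A), IsCoreflection Z f := by
  obtain ⟨X₀, f₀, hX₀, hlift₀⟩ := hpre A
  obtain ⟨V, w, δ, hT₁⟩ := distinguished_cocone_triangle₁ f₀
  obtain ⟨X₁, g₁, hX₁, hlift₁⟩ := hpre V
  obtain ⟨Cc, p, q, hT₂⟩ := distinguished_cocone_triangle (g₁ ≫ w)
  have hCc : Z Cc := hcone _ hT₂ hX₁ hX₀
  have hwf₀ : w ≫ f₀ = 0 := comp_distTriang_mor_zero₁₂ _ hT₁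
  have hdp : (g₁ ≫ w) ≫ p = 0 := comp_distTriang_mor_zero₁₂ _ hT₂
  obtain ⟨f₁, hf₁⟩ : ∃ f₁ : Cc ⟶ A, f₀ = p ≫ f₁ := Triangle.yoneda_exact₂ _ hT₂ f₀
    (by show (g₁ ≫ w) ≫ f₀ = 0; rw [Category.assoc, hwf₀, comp_zero])
  replace hf₁ : f₀ = p ≫ f₁ := hf₁
  have K1 : ∀ ⦃Y : D⦄, Z Y → ∀ t : Y ⟶ X₀, t ≫ f₀ = 0 → ∃ z : Y ⟶ X₁, t = z ≫ (g₁ ≫ w) := by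
    intro Y hY t ht
    obtain ⟨tV, htV⟩ : ∃ tV : Y ⟶ V, t = tV ≫ w := Triangle.coyoneda_exact₂ _ hT₁ t ht
    replace htV : t = tV ≫ w := htV
    obtain ⟨z, hz⟩ := hlift₁ hY tV
    exact ⟨z, by rw [htV, ← hz, Category.assoc]⟩
  obtain ⟨t₁, ht₁⟩ := hlift₀ hCc f₁
  have hpt : p ≫ t₁ ≫ p = p := by
    obtain ⟨z, hz⟩ := K1 hX₀ (p ≫ t₁ - 𝟙 X₀)
      (by rw [Preadditive.sub_comp, Category.assoc, ht₁, Category.id_comp, ← hf₁, sub_self])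
    have : p ≫ t₁ = 𝟙 X₀ + z ≫ (g₁ ≫ w) := by
      rw [← hz]; abel
    rw [← Category.assoc, this, Preadditive.add_comp, Category.id_comp,
      Category.assoc, hdp, comp_zero, add_zero]
  have hkill : ∀ ⦃Y : D⦄, Z Y → ∀ t : Y ⟶ Cc, t ≫ f₁ = 0 → t ≫ (t₁ ≫ p) = 0 := by
    intro Y hY t ht
    obtain ⟨z, hz⟩ := K1 hY (t ≫ t₁) (by rw [Category.assoc, ht₁, ht])
    rw [← Category.assoc, hz, Category.assoc, hdp, comp_zero]
  have hidem : (t₁ ≫ p) ≫ (t₁ ≫ p) = t₁ ≫ p := by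
    rw [Category.assoc, hpt]
  obtain ⟨R, i, e, hie, hei⟩ := IsIdempotentComplete.idempotents_split Cc (t₁ ≫ p) hidem
  have hR : Z R := hsum hCc ⟨i, e, hie⟩
  refine ⟨R, i ≫ f₁, hR, ?_⟩
  intro Y hY g
  obtain ⟨t, ht⟩ := hlift₀ hY g
  have hfac : ∀ u : Y ⟶ Cc, (u ≫ e) ≫ (i ≫ f₁) = u ≫ f₁ := by
    intro u
    calc (u ≫ e) ≫ (i ≫ f₁) = u ≫ (e ≫ i) ≫ f₁ := by simp only [Category.assoc]
    _ = u ≫ (t₁ ≫ p) ≫ f₁ := by rw [hei]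
    _ = u ≫ t₁ ≫ p ≫ f₁ := by simp only [Category.assoc]
    _ = u ≫ f₁ := by rw [← hf₁, ht₁]
  refine ⟨(t ≫ p) ≫ e, ?_, ?_⟩
  · calc ((t ≫ p) ≫ e) ≫ (i ≫ f₁) = (t ≫ p) ≫ f₁ := hfac _
    _ = t ≫ f₀ := by rw [Category.assoc, ← hf₁]
    _ = g := ht
  · intro y hy
    have hyi : (y - (t ≫ p) ≫ e) ≫ i ≫ f₁ = 0 := by
      rw [Preadditive.sub_comp]
      have h1 : ((t ≫ p) ≫ e) ≫ i ≫ f₁ = g := by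
        calc ((t ≫ p) ≫ e) ≫ (i ≫ f₁) = (t ≫ p) ≫ f₁ := hfac _
        _ = t ≫ f₀ := by rw [Category.assoc, ← hf₁]
        _ = g := ht
      rw [h1, hy, sub_self]
    have h2 := hkill hY ((y - (t ≫ p) ≫ e) ≫ i)
      (by rw [Category.assoc]; exact hyi)
    rw [← hei] at h2
    have h3 : (y - (t ≫ p) ≫ e) ≫ i ≫ e = 0 := by
      have h4 := congrArg (fun v => v ≫ e) h2
      simp only [Category.assoc, zero_comp] at h4
      rw [hie, Category.comp_id] at h4
      simpa only [Category.assoc] using h4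
    have h5 : y - (t ≫ p) ≫ e = 0 := by
      have : (y - (t ≫ p) ≫ e) ≫ (i ≫ e) = y - (t ≫ p) ≫ e := by
        rw [hie, Category.comp_id]
      rw [← this, h3]
    rw [sub_eq_zero] at h5
    exact h5

/-- dual construction: reflections from preenvelopes, cocones, summands, split idempotents. -/
theorem exists_reflection [IsIdempotentComplete D]
    (hpre : Preenveloping Z) (hsum : ClosedUnderSummands Z)
    (hcone : ∀ (T : Triangle D), (T ∈ distTriang D) → Z T.obj₂ → Z T.obj₃ → Z T.obj₁)
    (A : D) : ∃ (X : D) (f : A ⟶ X), IsReflection Z f := by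
  obtain ⟨X₀, f₀, hX₀, hlift₀⟩ := hpre A
  obtain ⟨V, w, δ, hT₁⟩ := distinguished_cocone_triangle f₀
  obtain ⟨X₁, g₁, hX₁, hlift₁⟩ := hpre V
  obtain ⟨Cc, p, q, hT₂⟩ := distinguished_cocone_triangle₁ (w ≫ g₁)
  have hCc : Z Cc := hcone _ hT₂ hX₀ hX₁
  have hwf₀ : f₀ ≫ w = 0 := comp_distTriang_mor_zero₁₂ _ hT₁
  have hdp : p ≫ (w ≫ g₁) = 0 := comp_distTriang_mor_zero₁₂ _ hT₂
  obtain ⟨f₁, hf₁⟩ : ∃ f₁ : A ⟶ Cc, f₀ = f₁ ≫ p := Triangle.coyoneda_exact₂ _ hT₂ f₀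
    (by show f₀ ≫ (w ≫ g₁) = 0; rw [← Category.assoc, hwf₀, zero_comp])
  replace hf₁ : f₀ = f₁ ≫ p := hf₁
  have K1 : ∀ ⦃Y : D⦄, Z Y → ∀ t : X₀ ⟶ Y, f₀ ≫ t = 0 → ∃ z : X₁ ⟶ Y, t = (w ≫ g₁) ≫ z := by
    intro Y hY t ht
    obtain ⟨tV, htV⟩ : ∃ tV : V ⟶ Y, t = w ≫ tV := Triangle.yoneda_exact₂ _ hT₁ t ht
    replace htV : t = w ≫ tV := htV
    obtain ⟨z, hz⟩ := hlift₁ hY tV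
    exact ⟨z, by rw [htV, ← hz, Category.assoc]⟩
  obtain ⟨t₁, ht₁⟩ := hlift₀ hCc f₁
  have hpt : p ≫ t₁ ≫ p = p := by
    obtain ⟨z, hz⟩ := K1 hX₀ (t₁ ≫ p - 𝟙 X₀)
      (by rw [Preadditive.comp_sub, ← Category.assoc, ht₁, Category.comp_id, ← hf₁, sub_self])
    have h6 : t₁ ≫ p = 𝟙 X₀ + (w ≫ g₁) ≫ z := by
      rw [← hz]; abel
    rw [h6, Preadditive.comp_add, Category.comp_id, ← Category.assoc, hdp,
      zero_comp, add_zero]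
  have hkill : ∀ ⦃Y : D⦄, Z Y → ∀ t : Cc ⟶ Y, f₁ ≫ t = 0 → (p ≫ t₁) ≫ t = 0 := by
    intro Y hY t ht
    obtain ⟨z, hz⟩ := K1 hY (t₁ ≫ t) (by rw [← Category.assoc, ht₁, ht])
    rw [Category.assoc, hz, ← Category.assoc, hdp, zero_comp]
  have hidem : (p ≫ t₁) ≫ (p ≫ t₁) = p ≫ t₁ := by
    rw [← Category.assoc, Category.assoc p t₁ p, hpt]
  obtain ⟨R, i, e, hie, hei⟩ := IsIdempotentComplete.idempotents_split Cc (p ≫ t₁) hidem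
  have hR : Z R := hsum hCc ⟨i, e, hie⟩
  refine ⟨R, f₁ ≫ e, hR, ?_⟩
  intro Y hY g
  obtain ⟨t, ht⟩ := hlift₀ hY g
  have hfac : ∀ u : Cc ⟶ Y, (f₁ ≫ e) ≫ (i ≫ u) = f₁ ≫ u := by
    intro u
    calc (f₁ ≫ e) ≫ (i ≫ u) = f₁ ≫ (e ≫ i) ≫ u := by simp only [Category.assoc]
    _ = f₁ ≫ (p ≫ t₁) ≫ u := by rw [hei]
    _ = (f₁ ≫ p) ≫ t₁ ≫ u := by simp only [Category.assoc]
    _ = f₁ ≫ u := by rw [← hf₁, ← Category.assoc, ht₁]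
  refine ⟨i ≫ p ≫ t, ?_, ?_⟩
  · calc (f₁ ≫ e) ≫ (i ≫ p ≫ t) = f₁ ≫ p ≫ t := hfac _
    _ = (f₁ ≫ p) ≫ t := (Category.assoc _ _ _).symm
    _ = f₀ ≫ t := by rw [← hf₁]
    _ = g := ht
  · intro y hy
    have h1 : (f₁ ≫ e) ≫ (i ≫ p ≫ t) = g := by
      calc (f₁ ≫ e) ≫ (i ≫ p ≫ t) = f₁ ≫ p ≫ t := hfac _
      _ = (f₁ ≫ p) ≫ t := (Category.assoc _ _ _).symm
      _ = f₀ ≫ t := by rw [← hf₁]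
      _ = g := ht
    have h2 : (f₁ ≫ e) ≫ (y - i ≫ p ≫ t) = 0 := by
      rw [Preadditive.comp_sub, hy, h1, sub_self]
    have h3 := hkill hY (e ≫ (y - i ≫ p ≫ t))
      (by rw [← Category.assoc]; exact h2)
    rw [← hei] at h3
    have h4 : e ≫ (y - i ≫ p ≫ t) = 0 := by
      calc e ≫ (y - i ≫ p ≫ t) = e ≫ (i ≫ e) ≫ (y - i ≫ p ≫ t) := by
            rw [hie, Category.id_comp]
      _ = (e ≫ i) ≫ e ≫ (y - i ≫ p ≫ t) := by simp only [Category.assoc]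
      _ = 0 := h3
    have h5 : y - i ≫ p ≫ t = 0 := by
      calc y - i ≫ p ≫ t = (i ≫ e) ≫ (y - i ≫ p ≫ t) := by rw [hie, Category.id_comp]
      _ = i ≫ e ≫ (y - i ≫ p ≫ t) := Category.assoc _ _ _
      _ = 0 := by rw [h4, comp_zero]
    rw [sub_eq_zero] at h5
    exact h5

/-- forward: pointwise coreflections give closure under summands. -/
theorem summands_of_coreflections (hiso : ClosedUnderIso Z)
    (hco : ∀ A : D, ∃ (X : D) (f : X ⟶ A), IsCoreflection Z f) :
    ClosedUnderSummands Z := by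
  intro X Y hX ⟨s, r, hsr⟩
  obtain ⟨RY, c, hRY, hu⟩ := hco Y
  obtain ⟨h, hh, -⟩ := hu hX r
  have hσ : (s ≫ h) ≫ c = 𝟙 Y := by rw [Category.assoc, hh, hsr]
  have hcσ : c ≫ s ≫ h = 𝟙 RY := by
    apply ExistsUnique.unique (hu hRY c)
    · rw [Category.assoc, hσ, Category.comp_id]
    · rw [Category.id_comp]
  exact hiso ⟨c, s ≫ h, hcσ, hσ⟩ hRY

/-- forward: pointwise coreflections + shift closure give closure under cones. -/
theorem cones_of_coreflections (hiso : ClosedUnderIso Z)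
    (hco : ∀ A : D, ∃ (X : D) (f : X ⟶ A), IsCoreflection Z f)
    (hshift : ∀ X : D, Z X → Z (X⟦(1 : ℤ)⟧)) :
    ∀ (T : Triangle D), (T ∈ distTriang D) → Z T.obj₁ → Z T.obj₂ → Z T.obj₃ := by
  intro T hT h₁ h₂
  obtain ⟨R, c, hR, hu⟩ := hco T.obj₃
  obtain ⟨k, hk, -⟩ := hu h₂ T.mor₂
  have hk0 : T.mor₁ ≫ k = 0 := by
    apply ExistsUnique.unique (hu h₁ (0 : T.obj₁ ⟶ T.obj₃))
    · rw [Category.assoc, hk]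
      exact comp_distTriang_mor_zero₁₂ _ hT
    · rw [zero_comp]
  obtain ⟨l, hl⟩ := Triangle.yoneda_exact₂ _ hT k hk0
  have h0 : T.mor₂ ≫ (𝟙 T.obj₃ - l ≫ c) = 0 := by
    rw [Preadditive.comp_sub, Category.comp_id, ← Category.assoc, ← hl, hk, sub_self]
  obtain ⟨v, hv⟩ := Triangle.yoneda_exact₃ _ hT _ h0
  obtain ⟨v', hv', -⟩ := hu (hshift _ h₁) v
  have hσ : (l + T.mor₃ ≫ v') ≫ c = 𝟙 T.obj₃ := by
    rw [Preadditive.add_comp, Category.assoc, hv', ← hv]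
    abel
  have hcσ : c ≫ (l + T.mor₃ ≫ v') = 𝟙 R := by
    apply ExistsUnique.unique (hu hR c)
    · rw [Category.assoc, hσ, Category.comp_id]
    · rw [Category.id_comp]
  exact hiso ⟨c, l + T.mor₃ ≫ v', hcσ, hσ⟩ hR

/-- dual forward: pointwise reflections give closure under summands. -/
theorem summands_of_reflections (hiso : ClosedUnderIso Z)
    (hco : ∀ A : D, ∃ (X : D) (f : A ⟶ X), IsReflection Z f) :
    ClosedUnderSummands Z := by
  intro X Y hX ⟨s, r, hsr⟩
  obtain ⟨RY, c, hRY, hu⟩ := hco Y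
  obtain ⟨h, hh, -⟩ := hu hX s
  have hσ : c ≫ (h ≫ r) = 𝟙 Y := by rw [← Category.assoc, hh, hsr]
  have hcσ : (h ≫ r) ≫ c = 𝟙 RY := by
    apply ExistsUnique.unique (hu hRY c)
    · rw [← Category.assoc, hσ, Category.id_comp]
    · rw [Category.comp_id]
  exact hiso ⟨h ≫ r, c, hcσ, hσ⟩ hRY

/-- dual forward: pointwise reflections + negative shift closure give closure under cocones. -/
theorem cocones_of_reflections (hiso : ClosedUnderIso Z)
    (hco : ∀ A : D, ∃ (X : D) (f : A ⟶ X), IsReflection Z f)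
    (hshift : ∀ X : D, Z X → Z (X⟦(-1 : ℤ)⟧)) :
    ∀ (T : Triangle D), (T ∈ distTriang D) → Z T.obj₂ → Z T.obj₃ → Z T.obj₁ := by
  intro T hT h₂ h₃
  obtain ⟨R, c, hR, hu⟩ := hco T.obj₁
  obtain ⟨k, hk, -⟩ := hu h₂ T.mor₁
  have hk0 : k ≫ T.mor₂ = 0 := by
    apply ExistsUnique.unique (hu h₃ (0 : T.obj₁ ⟶ T.obj₃))
    · rw [← Category.assoc, hk]
      exact comp_distTriang_mor_zero₁₂ _ hT
    · rw [comp_zero]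
  obtain ⟨l, hl⟩ := Triangle.coyoneda_exact₂ _ hT k hk0
  have h0 : (𝟙 T.obj₁ - c ≫ l) ≫ T.mor₁ = 0 := by
    rw [Preadditive.sub_comp, Category.id_comp, Category.assoc, ← hl, hk, sub_self]
  obtain ⟨v, hv⟩ : ∃ v : T.obj₁ ⟶ (T.obj₃)⟦(-1 : ℤ)⟧, 𝟙 T.obj₁ - c ≫ l = v ≫ T.invRotate.mor₁ :=
    Triangle.coyoneda_exact₂ _ (inv_rot_of_distTriang _ hT)
    (𝟙 T.obj₁ - c ≫ l) h0
  let m : (T.obj₃)⟦(-1 : ℤ)⟧ ⟶ T.obj₁ := T.invRotate.mor₁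
  replace hv : 𝟙 T.obj₁ - c ≫ l = v ≫ m := hv
  have hZv : Z (T.obj₃⟦(-1 : ℤ)⟧) := hshift _ h₃
  obtain ⟨v', hv', -⟩ := hu hZv v
  have hσ : c ≫ (l + v' ≫ m) = 𝟙 T.obj₁ := by
    rw [Preadditive.comp_add, ← Category.assoc, hv', ← hv]
    abel
  have hcσ : (l + v' ≫ m) ≫ c = 𝟙 R := by
    apply ExistsUnique.unique (hu hR c)
    · rw [← Category.assoc, hσ, Category.id_comp]
    · rw [Category.comp_id]
  exact hiso (⟨c, l + v' ≫ m, hσ, hcσ⟩ : T.obj₁ ≅ R).symm hR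

/-- membership of the zero object. -/
theorem zero_mem' (hsum : ClosedUnderSummands Z) (hex : ∃ X : D, Z X) : Z (0 : D) := by
  obtain ⟨X, hX⟩ := hex
  exact hsum hX ⟨0, 0, (isZero_zero D).eq_of_src _ _⟩

/-- positive shift closure. -/
theorem shift_mem_of_cones (hzero : Z (0 : D))
    (hcone : ∀ (T : Triangle D), (T ∈ distTriang D) → Z T.obj₁ → Z T.obj₂ → Z T.obj₃)
    (X : D) (hX : Z X) : Z (X⟦(1 : ℤ)⟧) :=
  hcone _ (rot_of_distTriang _ (contractible_distinguished X)) hX hzero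

/-- negative shift closure. -/
theorem neg_shift_mem_of_cocones (hiso : ClosedUnderIso Z) (hzero : Z (0 : D))
    (hcone : ∀ (T : Triangle D), (T ∈ distTriang D) → Z T.obj₂ → Z T.obj₃ → Z T.obj₁)
    (X : D) (hX : Z X) : Z (X⟦(-1 : ℤ)⟧) := by
  have h3 : Z ((X⟦(-1 : ℤ)⟧)⟦(1 : ℤ)⟧) := by
    refine hiso ?_ hX
    exact ((shiftFunctorCompIsoId D (-1 : ℤ) (1 : ℤ) (by norm_num)).app X).symm
  exact hcone _ (rot_of_distTriang _ (contractible_distinguished (X⟦(-1 : ℤ)⟧))) hzero h3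

end Tri

/-- Corollary 4.4: in a triangulated category with split idempotents, a
subcategory is coreflective and stable under `Σ` iff it is precovering and closed under
direct summands and cones; dually for reflective subcategories. -/
theorem triangulated_coreflective_reflective_iff
    {D : Type u} [Category.{v} D] [Preadditive D] [HasZeroObject D] [HasShift D ℤ]
    [∀ n : ℤ, (shiftFunctor D n).Additive] [Pretriangulated D] [IsTriangulated D]
    [IsIdempotentComplete D]
    (Z : D → Prop) (hiso : ClosedUnderIso Z) :
    ((IsCoreflectiveSub Z ∧ ∀ X : D, Z X → Z (X⟦(1 : ℤ)⟧)) ↔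
      (Precovering Z ∧ ClosedUnderSummands Z ∧
        ∀ (T : Triangle D), (T ∈ distTriang D) → Z T.obj₁ → Z T.obj₂ → Z T.obj₃)) ∧
    ((IsReflectiveSub Z ∧ ∀ X : D, Z X → Z (X⟦(-1 : ℤ)⟧)) ↔
      (Preenveloping Z ∧ ClosedUnderSummands Z ∧
        ∀ (T : Triangle D), (T ∈ distTriang D) → Z T.obj₂ → Z T.obj₃ → Z T.obj₁)) := by
  constructor
  · constructor
    · rintro ⟨hco, hshift⟩
      have hpt := coreflections_of_isCoreflectiveSub Z hco
      refine ⟨?_, summands_of_coreflections Z hiso hpt,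
        cones_of_coreflections Z hiso hpt hshift⟩
      intro A
      obtain ⟨X, f, h1, h2⟩ := hpt A
      exact ⟨X, f, h1, fun Y hY g => (h2 hY g).exists⟩
    · rintro ⟨hpre, hsum, hcone⟩
      have hzero : Z (0 : D) := by
        obtain ⟨X, f, hX, -⟩ := hpre (0 : D)
        exact zero_mem' Z hsum ⟨X, hX⟩
      exact ⟨isCoreflectiveSub_of_coreflections Z (exists_coreflection Z hpre hsum hcone),
        shift_mem_of_cones Z hzero hcone⟩
  · constructor
    · rintro ⟨hco, hshift⟩
      have hpt := reflections_of_isReflectiveSub Z hco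
      refine ⟨?_, summands_of_reflections Z hiso hpt,
        cocones_of_reflections Z hiso hpt hshift⟩
      intro A
      obtain ⟨X, f, h1, h2⟩ := hpt A
      exact ⟨X, f, h1, fun Y hY g => (h2 hY g).exists⟩
    · rintro ⟨hpre, hsum, hcone⟩
      have hzero : Z (0 : D) := by
        obtain ⟨X, f, hX, -⟩ := hpre (0 : D)
        exact zero_mem' Z hsum ⟨X, hX⟩
      exact ⟨isReflectiveSub_of_reflections Z (exists_reflection Z hpre hsum hcone),
        neg_shift_mem_of_cocones Z hiso hzero hcone⟩

end PaperStmt
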